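/- Let A^{(k)} be SPD matrices, P^{(k)} full column rank with A^{(k+1)} = (P^{(k)})ᵀ A^{(k)} P^{(k)}, and let Q_k = P^{(k)}((P^{(k)})ᵀP^{(k)})⁻¹(P^{(k)})ᵀ be the ℓ²-orthogonal projection onto range(P^{(k)}). If ‖(I − Q_k)v‖² ≤ (β/‖A^{(k)}‖₂²)‖A^{(k)}v‖² for all v, then for every v there exists v_c (namely v_c = ((P^{(k)})ᵀP^{(k)})⁻¹(P^{(k)})ᵀv) such that ‖v − P^{(k)}v_c‖²_{A^{(k)}} ≤ (β/‖A^{(k)}‖₂)‖A^{(k)}v‖². -/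

import Mathlib

open Matrix

/-- The `A`-norm of a vector, `‖v‖_A = √(vᵀ A v)`. -/
noncomputable def anorm {n : ℕ} (A : Matrix (Fin n) (Fin n) ℝ) (v : Fin n → ℝ) : ℝ :=
  Real.sqrt (v ⬝ᵥ A.mulVec v)

/-- The operator norm of a matrix `E` induced by the `A`-norm. -/
noncomputable def opNormA {n : ℕ} (A E : Matrix (Fin n) (Fin n) ℝ) : ℝ :=
  ⨆ v : {v : Fin n → ℝ // v ≠ 0}, anorm A (E.mulVec v) / anorm A v

open scoped Matrix.Norms.L2Operator in
/-- Key auxiliary: `wᵀ A w ≤ opNormA 1 A * (wᵀ w)`. -/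
lemma key_aux {n : ℕ} (A : Matrix (Fin n) (Fin n) ℝ) (w : Fin n → ℝ) :
    w ⬝ᵥ A.mulVec w ≤ opNormA (1 : Matrix (Fin n) (Fin n) ℝ) A * (w ⬝ᵥ w) := by
  have hanorm : ∀ u : Fin n → ℝ,
      anorm (1 : Matrix (Fin n) (Fin n) ℝ) u
        = ‖(EuclideanSpace.equiv (Fin n) ℝ).symm u‖ := by
    intro u
    rw [anorm, one_mulVec, EuclideanSpace.norm_eq]
    congr 1
    simp [dotProduct, sq]
  have hinner : ∀ u u' : Fin n → ℝ,
      u ⬝ᵥ u' = inner ℝ ((EuclideanSpace.equiv (Fin n) ℝ).symm u)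
        ((EuclideanSpace.equiv (Fin n) ℝ).symm u') := by
    intro u u'
    simp [dotProduct, PiLp.inner_apply, RCLike.inner_apply, mul_comm]
  by_cases hw : w = 0
  · subst hw
    simp [dotProduct]
  -- boundedness of the sup
  have hbdd : BddAbove (Set.range fun v : {v : Fin n → ℝ // v ≠ 0} =>
      anorm (1 : Matrix (Fin n) (Fin n) ℝ) (A.mulVec v) /
        anorm (1 : Matrix (Fin n) (Fin n) ℝ) v) := by
    refine ⟨‖A‖, ?_⟩
    rintro x ⟨⟨v, hv⟩, rfl⟩
    have hvpos : 0 < anorm (1 : Matrix (Fin n) (Fin n) ℝ) v := by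
      rw [hanorm]
      simpa using hv
    show anorm (1 : Matrix (Fin n) (Fin n) ℝ) (A.mulVec v) /
        anorm (1 : Matrix (Fin n) (Fin n) ℝ) v ≤ ‖A‖
    rw [div_le_iff₀ hvpos, hanorm, hanorm]
    exact A.l2_opNorm_mulVec _
  have hwpos : 0 < anorm (1 : Matrix (Fin n) (Fin n) ℝ) w := by
    rw [hanorm]
    simpa using hw
  have hle : anorm (1 : Matrix (Fin n) (Fin n) ℝ) (A.mulVec w) /
      anorm (1 : Matrix (Fin n) (Fin n) ℝ) w ≤ opNormA (1 : Matrix (Fin n) (Fin n) ℝ) A :=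
    le_ciSup hbdd ⟨w, hw⟩
  have hAw : anorm (1 : Matrix (Fin n) (Fin n) ℝ) (A.mulVec w)
      ≤ opNormA (1 : Matrix (Fin n) (Fin n) ℝ) A * anorm (1 : Matrix (Fin n) (Fin n) ℝ) w :=
    (div_le_iff₀ hwpos).mp hle
  calc w ⬝ᵥ A.mulVec w
      ≤ ‖(EuclideanSpace.equiv (Fin n) ℝ).symm w‖ *
          ‖(EuclideanSpace.equiv (Fin n) ℝ).symm (A.mulVec w)‖ := by
        rw [hinner]; exact real_inner_le_norm _ _
    _ = anorm (1 : Matrix (Fin n) (Fin n) ℝ) w *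
          anorm (1 : Matrix (Fin n) (Fin n) ℝ) (A.mulVec w) := by rw [hanorm, hanorm]
    _ ≤ anorm (1 : Matrix (Fin n) (Fin n) ℝ) w *
          (opNormA (1 : Matrix (Fin n) (Fin n) ℝ) A * anorm (1 : Matrix (Fin n) (Fin n) ℝ) w) :=
        mul_le_mul_of_nonneg_left hAw hwpos.le
    _ = opNormA (1 : Matrix (Fin n) (Fin n) ℝ) A *
          (anorm (1 : Matrix (Fin n) (Fin n) ℝ) w * anorm (1 : Matrix (Fin n) (Fin n) ℝ) w) := by
        ring
    _ = opNormA (1 : Matrix (Fin n) (Fin n) ℝ) A * (w ⬝ᵥ w) := by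
        rw [hanorm, hinner w w, real_inner_self_eq_norm_mul_norm]

theorem wapA2_implies_sap {n nc : ℕ}
    (A : Matrix (Fin n) (Fin n) ℝ) (hA : A.PosDef)
    (P : Matrix (Fin n) (Fin nc) ℝ) (hP : Function.Injective P.mulVec)
    (β : ℝ)
    (hwap : ∀ v : Fin n → ℝ,
      (((1 - P * (Pᵀ * P)⁻¹ * Pᵀ).mulVec v) ⬝ᵥ ((1 - P * (Pᵀ * P)⁻¹ * Pᵀ).mulVec v))
        ≤ (β / (opNormA (1 : Matrix (Fin n) (Fin n) ℝ) A) ^ 2) *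
            ((A.mulVec v) ⬝ᵥ (A.mulVec v))) :
    ∀ v : Fin n → ℝ, ∃ vc : Fin nc → ℝ,
      vc = ((Pᵀ * P)⁻¹ * Pᵀ).mulVec v ∧
      (v - P.mulVec vc) ⬝ᵥ A.mulVec (v - P.mulVec vc)
        ≤ (β / opNormA (1 : Matrix (Fin n) (Fin n) ℝ) A) *
            ((A.mulVec v) ⬝ᵥ (A.mulVec v)) := by
  intro v
  refine ⟨((Pᵀ * P)⁻¹ * Pᵀ).mulVec v, rfl, ?_⟩
  set N := opNormA (1 : Matrix (Fin n) (Fin n) ℝ) A with hN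
  have hN0 : 0 ≤ N :=
    Real.iSup_nonneg fun _ => div_nonneg (Real.sqrt_nonneg _) (Real.sqrt_nonneg _)
  set w := (1 - P * (Pᵀ * P)⁻¹ * Pᵀ).mulVec v with hwdef
  have hveq : v - P.mulVec (((Pᵀ * P)⁻¹ * Pᵀ).mulVec v) = w := by
    rw [hwdef, sub_mulVec, one_mulVec, mulVec_mulVec, Matrix.mul_assoc]
  rw [hveq]
  have h1 : w ⬝ᵥ A.mulVec w ≤ N * (w ⬝ᵥ w) := key_aux A w
  have h2 : N * (w ⬝ᵥ w) ≤ N * ((β / N ^ 2) * (A.mulVec v ⬝ᵥ A.mulVec v)) :=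
    mul_le_mul_of_nonneg_left (hwap v) hN0
  have h3 : N * ((β / N ^ 2) * (A.mulVec v ⬝ᵥ A.mulVec v))
      = (β / N) * (A.mulVec v ⬝ᵥ A.mulVec v) := by
    rcases eq_or_lt_of_le hN0 with h | h
    · simp [← h]
    · field_simp
  linarith
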